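/- For any parameter μ with 0 < μ < n, the set K = {X ∈ Sym(n,ℝ) : (tr X)² - μ·tr(X²) ≥ 0 and tr X ≥ 0} is closed under addition: if X₁, X₂ ∈ K then X₁ + X₂ ∈ K. -/
import Mathlib


/-- For 0 < μ < n, the set
`K = {X ∈ Sym(n,ℝ) : (tr X)² - μ·tr(X²) ≥ 0 and tr X ≥ 0}` is closed under addition. -/
theorem stmt0 (n : ℕ) (μ : ℝ) (hμ0 : 0 < μ) (hμn : μ < n)
    (X₁ X₂ : Matrix (Fin n) (Fin n) ℝ)
    (hX₁ : X₁.IsSymm) (hX₂ : X₂.IsSymm)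
    (h₁ : (X₁.trace) ^ 2 - μ * (X₁ ^ 2).trace ≥ 0) (h₁t : X₁.trace ≥ 0)
    (h₂ : (X₂.trace) ^ 2 - μ * (X₂ ^ 2).trace ≥ 0) (h₂t : X₂.trace ≥ 0) :
    ((X₁ + X₂).trace) ^ 2 - μ * ((X₁ + X₂) ^ 2).trace ≥ 0 ∧ (X₁ + X₂).trace ≥ 0 := by
  set t₁ := X₁.trace
  set t₂ := X₂.trace
  set s₁ : ℝ := ∑ p : Fin n × Fin n, (X₁ p.1 p.2) ^ 2 with hs₁def
  set s₂ : ℝ := ∑ p : Fin n × Fin n, (X₂ p.1 p.2) ^ 2 with hs₂def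
  set c : ℝ := ∑ p : Fin n × Fin n, X₁ p.1 p.2 * X₂ p.1 p.2 with hcdef
  have hsym₁ : ∀ i j, X₁ j i = X₁ i j := fun i j => hX₁.apply i j
  have hsym₂ : ∀ i j, X₂ j i = X₂ i j := fun i j => hX₂.apply i j
  have htr : ∀ (A B : Matrix (Fin n) (Fin n) ℝ),
      (A * B).trace = ∑ p : Fin n × Fin n, A p.1 p.2 * B p.2 p.1 := by
    intro A B
    rw [Matrix.trace, Fintype.sum_prod_type]
    simp [Matrix.diag, Matrix.mul_apply]
  have e₁ : (X₁ ^ 2).trace = s₁ := by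
    rw [sq, htr, hs₁def]
    exact Finset.sum_congr rfl fun p _ => by rw [hsym₁ p.2 p.1, sq]
  have e₂ : (X₂ ^ 2).trace = s₂ := by
    rw [sq, htr, hs₂def]
    exact Finset.sum_congr rfl fun p _ => by rw [hsym₂ p.2 p.1, sq]
  have ec : (X₁ * X₂).trace = c := by
    rw [htr, hcdef]
    exact Finset.sum_congr rfl fun p _ => by rw [hsym₂ p.2 p.1]
  rw [e₁] at h₁
  rw [e₂] at h₂
  have hs₁0 : 0 ≤ s₁ := Finset.sum_nonneg fun p _ => sq_nonneg _
  have hs₂0 : 0 ≤ s₂ := Finset.sum_nonneg fun p _ => sq_nonneg _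
  have hcs : c ^ 2 ≤ s₁ * s₂ := by
    rw [hcdef, hs₁def, hs₂def]
    exact Finset.sum_mul_sq_le_sq_mul_sq _ _ _
  have hc_le : c ≤ Real.sqrt (s₁ * s₂) :=
    calc c ≤ |c| := le_abs_self c
    _ = Real.sqrt (c ^ 2) := (Real.sqrt_sq_eq_abs c).symm
    _ ≤ Real.sqrt (s₁ * s₂) := Real.sqrt_le_sqrt hcs
  have hr2 : (μ * Real.sqrt (s₁ * s₂)) ^ 2 ≤ (t₁ * t₂) ^ 2 := by
    rw [mul_pow, Real.sq_sqrt (mul_nonneg hs₁0 hs₂0)]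
    calc μ ^ 2 * (s₁ * s₂) = (μ * s₁) * (μ * s₂) := by ring
    _ ≤ t₁ ^ 2 * t₂ ^ 2 :=
      mul_le_mul (by linarith) (by linarith) (by positivity) (sq_nonneg _)
    _ = (t₁ * t₂) ^ 2 := by ring
  have hμr : μ * Real.sqrt (s₁ * s₂) ≤ t₁ * t₂ := by
    have h1 : 0 ≤ μ * Real.sqrt (s₁ * s₂) := by positivity
    have h2 : 0 ≤ t₁ * t₂ := mul_nonneg h₁t h₂t
    nlinarith
  have hμc : μ * c ≤ t₁ * t₂ :=
    le_trans (mul_le_mul_of_nonneg_left hc_le hμ0.le) hμr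
  have etr : (X₁ + X₂).trace = t₁ + t₂ := Matrix.trace_add _ _
  have esq : ((X₁ + X₂) ^ 2).trace = s₁ + s₂ + 2 * c := by
    have : (X₁ + X₂) ^ 2 = X₁ ^ 2 + X₁ * X₂ + X₂ * X₁ + X₂ ^ 2 := by
      rw [sq, sq, sq]; noncomm_ring
    have ec' : (X₂ * X₁).trace = c := by rw [Matrix.trace_mul_comm, ec]
    rw [this, Matrix.trace_add, Matrix.trace_add, Matrix.trace_add, e₁, e₂, ec, ec']
    ring
  constructor
  · rw [etr, esq]; nlinarith
  · rw [etr]; linarith
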